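/- arXiv:2107.11873 — 5 statements merged into one kernel-verified Lean document; each statement's English description precedes it below -/
import Mathlib

section
/- Let 𝓔 be a state ensemble on a d-dimensional complex Hilbert space ℋ with finite label set X, and let Λ(𝓔) denote the largest among all eigenvalues of all the operators 𝓔(x), x ∈ X. If M is a measurement with outcome set X satisfying 𝓔(x)·M(x) = Λ(𝓔)·M(x) for all x ∈ X, then Pg(𝓔; M) = d·Λ(𝓔), and consequently Pg(𝓔) = d·Λ(𝓔) = Pg(𝓔; M). -/
open scoped BigOperators
open Matrix
open scoped ComplexOrder

noncomputable section

abbrev Mat (d : ℕ) := Matrix (Fin d) (Fin d) ℂ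

def IsStateEnsemble {d : ℕ} {X : Type*} [Fintype X] (E : X → Mat d) : Prop :=
  (∀ x, (E x).PosSemidef) ∧ (∑ x, (E x).trace) = 1

def IsMeasurement {d : ℕ} {Z : Type*} [Fintype Z] (M : Z → Mat d) : Prop :=
  (∀ z, (M z).PosSemidef) ∧ (∑ z, M z) = 1

def IsScore {X Y : Type*} (f : X → Y → ℝ) : Prop :=
  ∀ x y, 0 ≤ f x y ∧ f x y ≤ 1

def IsPartialInfo {T X : Type*} [Fintype T] (α : T → X → ℝ) : Prop :=
  (∀ t x, 0 ≤ α t x) ∧ ∀ x, (∑ t, α t x) = 1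

def IsPostProc {T Y Z : Type*} [Fintype Y] (ν : T → Y → Z → ℝ) : Prop :=
  (∀ t y z, 0 ≤ ν t y z) ∧ ∀ t z, (∑ y, ν t y z) = 1

def Pg {d : ℕ} {X : Type*} [Fintype X] (E M : X → Mat d) : ℝ :=
  ∑ x, ((E x) * (M x)).trace.re

def PgMax {d : ℕ} {X : Type*} [Fintype X] (E : X → Mat d) : ℝ :=
  sSup {p : ℝ | ∃ M : X → Mat d, IsMeasurement M ∧ p = Pg E M}

def Escore {d : ℕ} {X Y : Type*} [Fintype X] [Fintype Y]
    (f : X → Y → ℝ) (E : X → Mat d) (M : Y → Mat d) : ℝ :=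
  ∑ x, ∑ y, f x y * ((E x) * (M y)).trace.re

def EMax {d : ℕ} {X Y : Type*} [Fintype X] [Fintype Y]
    (f : X → Y → ℝ) (E : X → Mat d) : ℝ :=
  sSup {p : ℝ | ∃ M : Y → Mat d, IsMeasurement M ∧ p = Escore f E M}

def Epost {d : ℕ} {X Y T Z : Type*} [Fintype X] [Fintype Y] [Fintype T] [Fintype Z]
    (f : X → Y → ℝ) (α : T → X → ℝ) (E : X → Mat d)
    (M : Z → Mat d) (ν : T → Y → Z → ℝ) : ℝ :=
  ∑ x, ∑ y, ∑ t, ∑ z, f x y * α t x * ν t y z * ((E x) * (M z)).trace.re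

def EpostMax {d : ℕ} {X Y T : Type*} [Fintype X] [Fintype Y] [Fintype T]
    (f : X → Y → ℝ) (α : T → X → ℝ) (E : X → Mat d) : ℝ :=
  sSup {p : ℝ | ∃ (n : ℕ) (M : Fin n → Mat d) (ν : T → Y → Fin n → ℝ),
    IsMeasurement M ∧ IsPostProc ν ∧ p = Epost f α E M ν}

def Eprior {d : ℕ} {X Y T : Type*} [Fintype X] [Fintype Y] [Fintype T]
    (f : X → Y → ℝ) (α : T → X → ℝ) (E : X → Mat d) (N : T → Y → Mat d) : ℝ :=
  ∑ x, ∑ y, ∑ t, f x y * α t x * ((E x) * (N t y)).trace.re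

def EpriorMax {d : ℕ} {X Y T : Type*} [Fintype X] [Fintype Y] [Fintype T]
    (f : X → Y → ℝ) (α : T → X → ℝ) (E : X → Mat d) : ℝ :=
  sSup {p : ℝ | ∃ N : T → Y → Mat d, (∀ t, IsMeasurement (N t)) ∧ p = Eprior f α E N}

def IsCompatible {d : ℕ} {T Y : Type*} [Fintype T] [Fintype Y] (N : T → Y → Mat d) : Prop :=
  ∃ (n : ℕ) (M : Fin n → Mat d) (ν : T → Y → Fin n → ℝ),
    IsMeasurement M ∧ IsPostProc ν ∧ ∀ t y, N t y = ∑ z, ν t y z • M z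

def stdPost {T Y : Type*} [DecidableEq Y] : T → Y → (T → Y) → ℝ :=
  fun t y φ => if y = φ t then 1 else 0

def Δconst {d : ℕ} {X Y : Type*} [Fintype X] [Fintype Y]
    (f : X → Y → ℝ) (E : X → Mat d) : ℝ :=
  ∑ x, ∑ y, f x y * (E x).trace.re

def auxEns {d : ℕ} {X Y : Type*} [Fintype X] [Fintype Y]
    (f : X → Y → ℝ) (E : X → Mat d) (y : Y) : Mat d :=
  (Δconst f E)⁻¹ • ∑ x, f x y • E x

def auxEnsPost {d : ℕ} {X Y T : Type*} [Fintype X] [Fintype Y] [Fintype T]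
    (f : X → Y → ℝ) (α : T → X → ℝ) (E : X → Mat d) (φ : T → Y) : Mat d :=
  ((Fintype.card Y : ℝ) ^ (Fintype.card T - 1) * Δconst f E)⁻¹ •
    ∑ x, ∑ t, (f x (φ t) * α t x) • E x


lemma psd_trace_re_nonneg {d : ℕ} {A : Mat d} (hA : A.PosSemidef) : 0 ≤ A.trace.re := by
  have h : ∀ i, 0 ≤ (A i i).re := by
    intro i
    have := hA.dotProduct_mulVec_nonneg (Pi.single i 1)
    simp [dotProduct, mulVec, Pi.single_apply, Finset.sum_ite_eq, Complex.le_def] at this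
    simpa using this.1
  simpa [Matrix.trace, Matrix.diag, Complex.re_sum] using Finset.sum_nonneg fun i _ => h i

open scoped MatrixOrder in
lemma trace_mul_psd_re_nonneg {d : ℕ} {A B : Mat d} (hA : A.PosSemidef) (hB : B.PosSemidef) :
    0 ≤ (A * B).trace.re := by
  obtain ⟨C, rfl⟩ := CStarAlgebra.nonneg_iff_eq_star_mul_self.mp hA.nonneg
  rw [Matrix.star_eq_conjTranspose]
  have h1 : Cᴴ * C * B = Cᴴ * (C * B) := by rw [mul_assoc]
  rw [h1, Matrix.trace_mul_comm]
  have := hB.mul_mul_conjTranspose_same C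
  rw [mul_assoc]
  rw [mul_assoc] at this
  exact psd_trace_re_nonneg this

lemma smul_one_sub_psd {d : ℕ} {A : Mat d} (hA : A.IsHermitian) (Λ : ℝ)
    (h : ∀ i, hA.eigenvalues i ≤ Λ) : ((Λ:ℂ) • (1 : Mat d) - A).PosSemidef := by
  set U : Mat d := (hA.eigenvectorUnitary : Mat d)
  have hU : U * star U = 1 := Matrix.mem_unitaryGroup_iff.mp hA.eigenvectorUnitary.2
  have key : (Λ:ℂ) • (1 : Mat d) - A
      = U * Matrix.diagonal (fun i => ((Λ - hA.eigenvalues i : ℝ) : ℂ)) * star U := by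
    have hd : Matrix.diagonal (fun i : Fin d => ((Λ - hA.eigenvalues i : ℝ) : ℂ))
        = (Λ:ℂ) • (1 : Mat d) - Matrix.diagonal ((RCLike.ofReal ∘ hA.eigenvalues : Fin d → ℂ)) := by
      ext i j
      by_cases hij : i = j <;>
        simp [Matrix.diagonal, hij, Matrix.one_apply, sub_eq_add_neg]
    rw [hd]
    rw [Matrix.mul_sub, Matrix.sub_mul, Matrix.mul_smul, Matrix.smul_mul, Matrix.mul_one, hU]
    exact congrArg (fun B => (Λ:ℂ) • (1 : Mat d) - B) hA.spectral_theorem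
  rw [key]
  refine Matrix.PosSemidef.mul_mul_conjTranspose_same ?_ U
  refine Matrix.posSemidef_diagonal_iff.mpr fun i => ?_
  rw [Complex.le_def]
  simp [sub_nonneg, h i]

theorem stmt1 {d : ℕ} {X : Type} [Fintype X] (E : X → Mat d) (hE : IsStateEnsemble E)
    (Λ : ℝ)
    (hΛ : IsGreatest {l : ℝ | ∃ (x : X) (v : Fin d → ℂ),
      v ≠ 0 ∧ (E x).mulVec v = (l : ℂ) • v} Λ)
    (M : X → Mat d) (hM : IsMeasurement M)
    (hcond : ∀ x, E x * M x = (Λ : ℂ) • M x) :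
    Pg E M = d * Λ ∧ PgMax E = d * Λ := by
  classical
  have hEig : ∀ (x : X) (i : Fin d), (hE.1 x).1.eigenvalues i ≤ Λ := by
    intro x i
    refine hΛ.2 ⟨x, ⇑((hE.1 x).1.eigenvectorBasis i), ?_, ?_⟩
    · intro hz
      have : (hE.1 x).1.eigenvectorBasis i = 0 := by
        ext k; exact congrFun hz k
      exact (hE.1 x).1.eigenvectorBasis.toBasis.ne_zero i (by simpa using this)
    · rw [(hE.1 x).1.mulVec_eigenvectorBasis]
      ext k
      simp [Complex.real_smul]
  have hPg : Pg E M = d * Λ := by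
    have hterm : ∀ x, ((E x) * (M x)).trace.re = Λ * (M x).trace.re := by
      intro x
      rw [hcond x]
      simp [Matrix.trace_smul, Complex.re_ofReal_mul]
    have hsum : (∑ x, (M x).trace.re) = (d:ℝ) := by
      have h2 : (∑ x, (M x).trace) = (d:ℂ) := by
        rw [← Matrix.trace_sum, hM.2, Matrix.trace_one]
        simp
      calc ∑ x, (M x).trace.re = ((∑ x, (M x).trace)).re := by rw [Complex.re_sum]
        _ = (d:ℝ) := by rw [h2]; simp
    calc Pg E M = ∑ x, Λ * (M x).trace.re := Finset.sum_congr rfl fun x _ => hterm x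
      _ = Λ * ∑ x, (M x).trace.re := by rw [Finset.mul_sum]
      _ = d * Λ := by rw [hsum]; ring
  refine ⟨hPg, ?_⟩
  have hub : ∀ N : X → Mat d, IsMeasurement N → Pg E N ≤ d * Λ := by
    intro N hN
    have hterm : ∀ x, ((E x) * (N x)).trace.re ≤ Λ * (N x).trace.re := by
      intro x
      have hpsd : ((Λ:ℂ) • (1 : Mat d) - E x).PosSemidef :=
        smul_one_sub_psd (hE.1 x).1 Λ (hEig x)
      have h0 := trace_mul_psd_re_nonneg hpsd (hN.1 x)
      rw [Matrix.sub_mul, Matrix.smul_mul, Matrix.one_mul, Matrix.trace_sub,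
        Matrix.trace_smul] at h0
      have : ((Λ:ℂ) • (N x).trace - ((E x) * (N x)).trace).re
          = Λ * (N x).trace.re - ((E x) * (N x)).trace.re := by
        simp [Complex.sub_re, Complex.re_ofReal_mul, smul_eq_mul]
      rw [this] at h0
      linarith
    have hsumN : (∑ x, (N x).trace.re) = (d:ℝ) := by
      have h2 : (∑ x, (N x).trace) = (d:ℂ) := by
        rw [← Matrix.trace_sum, hN.2, Matrix.trace_one]
        simp
      calc ∑ x, (N x).trace.re = ((∑ x, (N x).trace)).re := by rw [Complex.re_sum]
        _ = (d:ℝ) := by rw [h2]; simp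
    calc Pg E N ≤ ∑ x, Λ * (N x).trace.re := Finset.sum_le_sum fun x _ => hterm x
      _ = Λ * ∑ x, (N x).trace.re := by rw [Finset.mul_sum]
      _ = d * Λ := by rw [hsumN]; ring
  have hgreat : IsGreatest {p : ℝ | ∃ M' : X → Mat d, IsMeasurement M' ∧ p = Pg E M'} (d * Λ) :=
    ⟨⟨M, hM, hPg.symm⟩, by rintro p ⟨N, hN, rfl⟩; exact hub N hN⟩
  exact hgreat.csSup_eq
end
end

section
/- Let 𝓔 be a state ensemble on a d-dimensional complex Hilbert space ℋ with finite label set X, and let Λ(𝓔) denote the largest among all eigenvalues of all the operators 𝓔(x), x ∈ X. If Pg(𝓔) = d·Λ(𝓔), then there exists a measurement M with outcome set X satisfying 𝓔(x)·M(x) = Λ(𝓔)·M(x) for all x ∈ X. -/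
open scoped BigOperators
open Matrix
open scoped ComplexOrder

noncomputable section

lemma trace_ctms {d : ℕ} (Q : Mat d) :
    (Qᴴ * Q).trace = ((∑ j, ∑ k, Complex.normSq (Q k j) : ℝ) : ℂ) := by
  simp only [Matrix.trace, Matrix.diag, Matrix.mul_apply, Matrix.conjTranspose_apply]
  push_cast
  refine Finset.sum_congr rfl fun j _ => Finset.sum_congr rfl fun k _ => ?_
  rw [Complex.normSq_eq_conj_mul_self]
  rfl

open scoped MatrixOrder in
lemma psd_exists_factor {d : ℕ} {A : Mat d} (hA : A.PosSemidef) : ∃ B : Mat d, A = Bᴴ * B :=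
  CStarAlgebra.nonneg_iff_eq_star_mul_self.mp hA.nonneg

lemma psd_mul_trace {d : ℕ} {A B : Mat d} (hA : A.PosSemidef) (hB : B.PosSemidef) :
    0 ≤ (A * B).trace.re ∧ ((A * B).trace.re = 0 → A * B = 0) := by
  obtain ⟨C, rfl⟩ := psd_exists_factor hA
  obtain ⟨D, rfl⟩ := psd_exists_factor hB
  set Q := D * Cᴴ with hQ
  have hAB : (Cᴴ * C) * (Dᴴ * D) = Cᴴ * Qᴴ * D := by
    simp [hQ, Matrix.conjTranspose_mul, Matrix.mul_assoc]
  have htr : ((Cᴴ * C) * (Dᴴ * D)).trace = (Qᴴ * Q).trace := by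
    rw [hAB, Matrix.mul_assoc, Matrix.trace_mul_comm, Matrix.mul_assoc, ← hQ,
      Matrix.trace_mul_comm]
  rw [htr, trace_ctms, Complex.ofReal_re]
  constructor
  · exact Finset.sum_nonneg fun j _ => Finset.sum_nonneg fun k _ => Complex.normSq_nonneg _
  · intro h0
    have hQ0 : Q = 0 := by
      ext k j
      have := (Finset.sum_eq_zero_iff_of_nonneg (fun j _ => Finset.sum_nonneg
        (fun k _ => Complex.normSq_nonneg _))).mp h0 j (Finset.mem_univ j)
      have := (Finset.sum_eq_zero_iff_of_nonneg
        (fun k _ => Complex.normSq_nonneg _)).mp this k (Finset.mem_univ k)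
      simpa [Complex.normSq_eq_zero] using this
    rw [hAB, hQ0]
    simp


lemma psd_entry_bound {d : ℕ} {A : Mat d} (hA : A.PosSemidef) (i j : Fin d) :
    ‖A i j‖ ^ 2 ≤ (A i i).re * (A j j).re := by
  obtain ⟨B, rfl⟩ := psd_exists_factor hA
  have hdiag : ∀ k : Fin d, ((Bᴴ * B) k k).re = ∑ l, ‖B l k‖ ^ 2 := by
    intro k
    simp only [Matrix.mul_apply, Matrix.conjTranspose_apply, Complex.re_sum]
    refine Finset.sum_congr rfl fun l _ => ?_
    rw [Complex.star_def, ← Complex.normSq_eq_conj_mul_self, Complex.ofReal_re]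
    rw [Complex.normSq_eq_norm_sq]
  have h1 : ‖(Bᴴ * B) i j‖ ≤ ∑ l, ‖B l i‖ * ‖B l j‖ := by
    simp only [Matrix.mul_apply, Matrix.conjTranspose_apply]
    refine (norm_sum_le _ _).trans ?_
    refine Finset.sum_le_sum fun l _ => ?_
    rw [norm_mul, norm_star]
  have h2 : (∑ l, ‖B l i‖ * ‖B l j‖) ^ 2 ≤ (∑ l, ‖B l i‖ ^ 2) * (∑ l, ‖B l j‖ ^ 2) :=
    Finset.sum_mul_sq_le_sq_mul_sq _ _ _
  rw [hdiag i, hdiag j]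
  calc ‖(Bᴴ * B) i j‖ ^ 2 ≤ (∑ l, ‖B l i‖ * ‖B l j‖) ^ 2 := by
        apply pow_le_pow_left₀ (norm_nonneg _) h1
    _ ≤ _ := h2

lemma psd_diag_nonneg {d : ℕ} {A : Mat d} (hA : A.PosSemidef) (i : Fin d) :
    0 ≤ (A i i).re := by
  obtain ⟨B, rfl⟩ := psd_exists_factor hA
  simp only [Matrix.mul_apply, Matrix.conjTranspose_apply, Complex.re_sum]
  refine Finset.sum_nonneg fun l _ => ?_
  rw [Complex.star_def, ← Complex.normSq_eq_conj_mul_self, Complex.ofReal_re]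
  exact Complex.normSq_nonneg _


lemma shift_psd {d : ℕ} {X : Type} {E : X → Mat d} {Λ : ℝ}
    (hE : ∀ x, (E x).PosSemidef)
    (hub : ∀ l ∈ {l : ℝ | ∃ (x : X) (v : Fin d → ℂ),
      v ≠ 0 ∧ (E x).mulVec v = (l : ℂ) • v}, l ≤ Λ) (x : X) :
    ((Λ : ℂ) • (1 : Mat d) - E x).PosSemidef := by
  have hH : (E x).IsHermitian := (hE x).isHermitian
  have hHA : ((Λ : ℂ) • (1 : Mat d) - E x).IsHermitian := by
    refine Matrix.IsHermitian.sub ?_ hH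
    simp [Matrix.IsHermitian, Matrix.conjTranspose_smul, Complex.star_def,
      Complex.conj_ofReal]
  refine hHA.posSemidef_iff_eigenvalues_nonneg.mpr fun i => ?_
  show (0:ℝ) ≤ _
  set μ : ℝ := hHA.eigenvalues i with hμ
  set w : Fin d → ℂ := ⇑(hHA.eigenvectorBasis i) with hw
  have hwne : w ≠ 0 := by
    have := hHA.eigenvectorBasis.orthonormal.ne_zero i
    intro h
    apply this
    ext k
    exact congrFun h k
  have h1 : ((Λ : ℂ) • (1 : Mat d) - E x) *ᵥ w = (μ : ℂ) • w := by
    have h := hHA.mulVec_eigenvectorBasis i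
    rw [← hw, ← hμ] at h
    rw [h]
    ext k
    simp [Complex.real_smul]
  have h2 : (E x) *ᵥ w = ((Λ - μ : ℝ) : ℂ) • w := by
    have hsub : ((Λ : ℂ) • (1 : Mat d) - E x) *ᵥ w
        = (Λ : ℂ) • w - (E x) *ᵥ w := by
      rw [Matrix.sub_mulVec, Matrix.smul_mulVec, Matrix.one_mulVec]
    rw [hsub] at h1
    push_cast
    rw [sub_smul]
    rw [← h1]
    abel
  have hle : Λ - μ ≤ Λ := hub _ ⟨x, w, hwne, h2⟩
  linarith

lemma exists_max_measurement {d : ℕ} {X : Type} [Fintype X] (E : X → Mat d)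
    (hSne : ∃ M : X → Mat d, IsMeasurement M) :
    ∃ M₀ : X → Mat d, IsMeasurement M₀ ∧ ∀ M, IsMeasurement M → Pg E M ≤ Pg E M₀ := by
  classical
  set S : Set (X → Mat d) := {M | IsMeasurement M} with hS
  have hclosed : IsClosed S := by
    have h1 : IsClosed {M : X → Mat d | ∑ x, M x = 1} :=
      isClosed_eq (continuous_finset_sum _ fun x _ => continuous_apply x) continuous_const
    have h0 : IsClosed {z : ℂ | 0 ≤ z} := by
      have : {z : ℂ | 0 ≤ z} = Complex.re ⁻¹' Set.Ici 0 ∩ Complex.im ⁻¹' {0} := by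
        ext z
        simp [Complex.le_def, eq_comm]
      rw [this]
      exact (isClosed_Ici.preimage Complex.continuous_re).inter
        (isClosed_singleton.preimage Complex.continuous_im)
    have h2 : ∀ x : X, IsClosed {M : X → Mat d | (M x).PosSemidef} := by
      intro x
      have ha : IsClosed {M : X → Mat d | (M x).IsHermitian} :=
        isClosed_eq ((continuous_apply x).matrix_conjTranspose) (continuous_apply x)
      have hb : IsClosed {M : X → Mat d | ∀ v : Fin d → ℂ,
          0 ≤ dotProduct (star v) ((M x) *ᵥ v)} := by
        rw [Set.setOf_forall]
        refine isClosed_iInter fun v => ?_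
        exact h0.preimage (continuous_const.dotProduct
          ((continuous_apply x).matrix_mulVec continuous_const))
      have : {M : X → Mat d | (M x).PosSemidef}
          = {M : X → Mat d | (M x).IsHermitian} ∩ {M : X → Mat d | ∀ v : Fin d → ℂ,
          0 ≤ dotProduct (star v) ((M x) *ᵥ v)} := by
        ext M
        exact Matrix.posSemidef_iff_dotProduct_mulVec
      rw [this]
      exact ha.inter hb
    have : S = (⋂ x : X, {M : X → Mat d | (M x).PosSemidef})
        ∩ {M : X → Mat d | ∑ x, M x = 1} := by
      ext M
      simp only [hS, Set.mem_setOf_eq, Set.mem_inter_iff, Set.mem_iInter, IsMeasurement]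
    rw [this]
    exact (isClosed_iInter h2).inter h1
  set K : Set (X → Mat d) := Set.univ.pi fun _ : X =>
    (Set.univ.pi fun _ : Fin d => Set.univ.pi fun _ : Fin d => Metric.closedBall (0:ℂ) 1)
    with hK
  have hKc : IsCompact K :=
    isCompact_univ_pi fun _ => isCompact_univ_pi fun _ => isCompact_univ_pi fun _ =>
      isCompact_closedBall _ _
  have hsub : S ⊆ K := by
    intro M hM
    have key : ∀ (x : X) (i j : Fin d), ‖M x i j‖ ≤ 1 := by
      intro x i j
      have hdiag : ∀ (y : X) (k : Fin d), (M y k k).re ≤ 1 := by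
        intro y k
        have h1 : ∑ z, (M z k k).re = 1 := by
          have := congrArg (fun A : Mat d => (A k k).re) hM.2
          simpa [Matrix.sum_apply, Complex.re_sum, Matrix.one_apply_eq] using this
        calc (M y k k).re ≤ ∑ z, (M z k k).re :=
              Finset.single_le_sum (fun z _ => psd_diag_nonneg (hM.1 z) k) (Finset.mem_univ y)
          _ = 1 := h1
      have h2 := psd_entry_bound (hM.1 x) i j
      have h3 : (M x i i).re * (M x j j).re ≤ 1 :=
        mul_le_one₀ (hdiag x i) (psd_diag_nonneg (hM.1 x) j) (hdiag x j)
      nlinarith [norm_nonneg (M x i j)]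
    exact fun x _ => fun i _ => fun j _ => by
      rw [Metric.mem_closedBall, dist_zero_right]; exact key x i j
  have hScompact : IsCompact S := hKc.of_isClosed_subset hclosed hsub
  have hcont : Continuous fun M : X → Mat d => Pg E M := by
    unfold Pg
    exact continuous_finset_sum _ fun x _ => Complex.continuous_re.comp
      (Continuous.matrix_trace (continuous_const.matrix_mul (continuous_apply x)))
  obtain ⟨M₀, hM₀, hmax⟩ := hScompact.exists_isMaxOn hSne hcont.continuousOn
  exact ⟨M₀, hM₀, fun M hM => hmax hM⟩

theorem stmt2 {d : ℕ} {X : Type} [Fintype X] (E : X → Mat d) (hE : IsStateEnsemble E)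
    (Λ : ℝ)
    (hΛ : IsGreatest {l : ℝ | ∃ (x : X) (v : Fin d → ℂ),
      v ≠ 0 ∧ (E x).mulVec v = (l : ℂ) • v} Λ)
    (hPg : PgMax E = d * Λ) :
    ∃ M : X → Mat d, IsMeasurement M ∧ ∀ x, E x * M x = (Λ : ℂ) • M x := by
  classical
  have hX : Nonempty X := by
    by_contra h
    rw [not_nonempty_iff] at h
    have h2 := hE.2
    simp [Finset.univ_eq_empty] at h2
  have hn : ((Fintype.card X : ℂ)) ≠ 0 :=
    Nat.cast_ne_zero.mpr Fintype.card_ne_zero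
  have hSne : ∃ M : X → Mat d, IsMeasurement M := by
    refine ⟨fun _ => ((Fintype.card X : ℂ))⁻¹ • (1 : Mat d), ?_, ?_⟩
    · intro z
      have hdg : ((Fintype.card X : ℂ))⁻¹ • (1 : Mat d)
          = Matrix.diagonal (fun _ => (((Fintype.card X : ℝ))⁻¹ : ℂ)) := by
        ext i j
        by_cases hij : i = j <;>
          simp [Matrix.one_apply, Matrix.diagonal_apply, hij, Matrix.smul_apply]
      rw [hdg]
      refine Matrix.PosSemidef.diagonal fun i => ?_
      show (0:ℂ) ≤ _
      rw [← Complex.ofReal_inv]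
      exact Complex.zero_le_real.mpr (inv_nonneg.mpr (Nat.cast_nonneg _))
    · rw [Finset.sum_const, Finset.card_univ, ← Nat.cast_smul_eq_nsmul ℂ,
        smul_smul, mul_inv_cancel₀ hn, one_smul]
  obtain ⟨M₀, hM₀, hmax⟩ := exists_max_measurement E hSne
  set V : Set ℝ := {p : ℝ | ∃ M : X → Mat d, IsMeasurement M ∧ p = Pg E M} with hV
  have hub : ∀ p ∈ V, p ≤ Pg E M₀ := by
    rintro p ⟨M, hM, rfl⟩
    exact hmax M hM
  have hmem : Pg E M₀ ∈ V := ⟨M₀, hM₀, rfl⟩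
  have hPgM₀ : PgMax E = Pg E M₀ :=
    le_antisymm (csSup_le ⟨_, hmem⟩ hub) (le_csSup ⟨_, hub⟩ hmem)
  have hPg0 : Pg E M₀ = d * Λ := by rw [← hPgM₀, hPg]
  -- the shifted operators are PSD
  have hAx : ∀ x : X, ((Λ : ℂ) • (1 : Mat d) - E x).PosSemidef :=
    fun x => shift_psd hE.1 hΛ.2 x
  -- sum of nonneg traces is zero
  have hterm : ∀ x : X, (((Λ : ℂ) • (1 : Mat d) - E x) * M₀ x).trace.re
      = Λ * (M₀ x).trace.re - ((E x) * (M₀ x)).trace.re := by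
    intro x
    rw [Matrix.sub_mul, Matrix.smul_mul, one_mul, Matrix.trace_sub, Matrix.trace_smul]
    rw [Complex.sub_re]
    congr 1
    simp [Complex.smul_re]
  have htrsum : ∑ x, (M₀ x).trace.re = (d : ℝ) := by
    have h1 : ∑ x, (M₀ x).trace = (d : ℂ) := by
      rw [← Matrix.trace_sum, hM₀.2, Matrix.trace_one]
      simp
    calc ∑ x, (M₀ x).trace.re = (∑ x, (M₀ x).trace).re := by rw [Complex.re_sum]
      _ = (d : ℝ) := by rw [h1]; simp
  have hsum0 : ∑ x, (((Λ : ℂ) • (1 : Mat d) - E x) * M₀ x).trace.re = 0 := by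
    have : ∑ x, (((Λ : ℂ) • (1 : Mat d) - E x) * M₀ x).trace.re
        = Λ * (d : ℝ) - Pg E M₀ := by
      rw [Finset.sum_congr rfl fun x _ => hterm x, Finset.sum_sub_distrib,
        ← Finset.mul_sum, htrsum]
      rfl
    rw [this, hPg0]
    ring
  have hzero : ∀ x : X, (((Λ : ℂ) • (1 : Mat d) - E x) * M₀ x).trace.re = 0 := by
    intro x
    exact (Finset.sum_eq_zero_iff_of_nonneg
      (fun y _ => (psd_mul_trace (hAx y) (hM₀.1 y)).1)).mp hsum0 x (Finset.mem_univ x)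
  refine ⟨M₀, hM₀, fun x => ?_⟩
  have h0 : ((Λ : ℂ) • (1 : Mat d) - E x) * M₀ x = 0 :=
    (psd_mul_trace (hAx x) (hM₀.1 x)).2 (hzero x)
  rw [Matrix.sub_mul, Matrix.smul_mul, one_mul, sub_eq_zero] at h0
  exact h0.symm
end
end

section
/- Reduction of a general guessing game to state discrimination: Let 𝓔 be a state ensemble on a finite-dimensional complex Hilbert space ℋ with finite label set X, let Y be a finite set, let f : X × Y → [0,1] be a score function, and suppose the constant Δ(𝓔,f) = Σ_{x,y} f(x,y)·tr[𝓔(x)] is nonzero. Define the auxiliary state ensemble 𝓔_f with label set Y by 𝓔_f(y) = Δ(𝓔,f)^{-1} Σ_x f(x,y)·𝓔(x). Then 𝓔_f is a state ensemble, and for every measurement M with outcome set Y one has E_f(𝓔; M) = Δ(𝓔,f)·Pg(𝓔_f; M); consequently E_f(𝓔) = Δ(𝓔,f)·Pg(𝓔_f). -/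
open scoped BigOperators
open Matrix
open scoped ComplexOrder

noncomputable section

open scoped Pointwise

lemma psd_trace_nonneg' {d : ℕ} {A : Mat d} (hA : A.PosSemidef) : 0 ≤ A.trace := by
  rw [Matrix.trace]
  apply Finset.sum_nonneg
  intro i _
  exact hA.diag_nonneg

lemma psd_trace_re_coe' {d : ℕ} {A : Mat d} (hA : A.PosSemidef) :
    ((A.trace.re : ℝ) : ℂ) = A.trace := by
  have h := Complex.nonneg_iff.mp (psd_trace_nonneg' hA)
  exact (Complex.ext (by simp) (by simp [h.2.symm])).symm

lemma psd_smul_real' {d : ℕ} {c : ℝ} (hc : 0 ≤ c) {A : Mat d} (hA : A.PosSemidef) :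
    (c • A).PosSemidef := by
  constructor
  · unfold Matrix.IsHermitian
    rw [Matrix.conjTranspose_smul, hA.1.eq]
    simp
  · intro x
    exact (hA.smul hc).2 x

lemma psd_sum' {d : ℕ} {ι : Type*} (s : Finset ι) (g : ι → Mat d)
    (hg : ∀ i ∈ s, (g i).PosSemidef) : (∑ i ∈ s, g i).PosSemidef := by
  classical
  induction s using Finset.induction_on with
  | empty => simpa using Matrix.PosSemidef.zero
  | insert a s hni ih =>
    rw [Finset.sum_insert hni]
    exact (hg _ (Finset.mem_insert_self _ _)).add
      (ih fun i hi => hg i (Finset.mem_insert_of_mem hi))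

lemma psd_trace_mul_nonneg' {d : ℕ} {A B : Mat d} (hA : A.PosSemidef) (hB : B.PosSemidef) :
    0 ≤ (A * B).trace := by
  obtain ⟨C, hC⟩ : ∃ C : Mat d, A = Cᴴ * C := by
    open scoped MatrixOrder Matrix.Norms.L2Operator in
    exact CStarAlgebra.nonneg_iff_eq_star_mul_self.mp hA.nonneg
  rw [hC, Matrix.mul_assoc, Matrix.trace_mul_comm]
  exact psd_trace_nonneg' (hB.mul_mul_conjTranspose_same C)

lemma re_real_smul' (r : ℝ) (z : ℂ) : (r • z).re = r * z.re := by
  simp [Complex.real_smul]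

theorem stmt4 {d : ℕ} {X Y : Type} [Fintype X] [Fintype Y]
    (E : X → Mat d) (hE : IsStateEnsemble E)
    (f : X → Y → ℝ) (hf : IsScore f)
    (hΔ : Δconst f E ≠ 0) :
    IsStateEnsemble (auxEns f E) ∧
    (∀ M : Y → Mat d, IsMeasurement M →
      Escore f E M = Δconst f E * Pg (auxEns f E) M) ∧
    EMax f E = Δconst f E * PgMax (auxEns f E) := by
  classical
  obtain ⟨hEpsd, hEtr⟩ := hE
  have htrnn : ∀ x, 0 ≤ (E x).trace.re := fun x =>
    (Complex.nonneg_iff.mp (psd_trace_nonneg' (hEpsd x))).1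
  have hΔnn : 0 ≤ Δconst f E :=
    Finset.sum_nonneg fun x _ => Finset.sum_nonneg fun y _ =>
      mul_nonneg (hf x y).1 (htrnn x)
  -- Part 1 : state ensemble
  have hens : IsStateEnsemble (auxEns f E) := by
    constructor
    · intro y
      exact psd_smul_real' (inv_nonneg.mpr hΔnn)
        (psd_sum' _ _ fun x _ => psd_smul_real' (hf x y).1 (hEpsd x))
    · have hterm : ∀ y, (auxEns f E y).trace =
          (((Δconst f E)⁻¹ * ∑ x, f x y * (E x).trace.re : ℝ) : ℂ) := by
        intro y
        unfold auxEns
        rw [Matrix.trace_smul, Matrix.trace_sum, Complex.ofReal_mul, Complex.ofReal_sum]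
        rw [Complex.real_smul]
        congr 1
        refine Finset.sum_congr rfl fun x _ => ?_
        rw [Matrix.trace_smul, Complex.real_smul, Complex.ofReal_mul,
          psd_trace_re_coe' (hEpsd x)]
      simp_rw [hterm]
      rw [← Complex.ofReal_sum, ← Finset.mul_sum]
      norm_cast
      rw [Finset.sum_comm]
      exact inv_mul_cancel₀ hΔ
  -- Part 2 : score vs guessing probability
  have key : ∀ M : Y → Mat d, IsMeasurement M →
      Escore f E M = Δconst f E * Pg (auxEns f E) M := by
    intro M hM
    have hPg : Pg (auxEns f E) M =
        (Δconst f E)⁻¹ * ∑ y, ∑ x, f x y * ((E x) * (M y)).trace.re := by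
      unfold Pg auxEns
      rw [Finset.mul_sum]
      refine Finset.sum_congr rfl fun y _ => ?_
      rw [Matrix.smul_mul, Matrix.sum_mul, Matrix.trace_smul, Matrix.trace_sum,
        re_real_smul']
      congr 1
      rw [Complex.re_sum]
      refine Finset.sum_congr rfl fun x _ => ?_
      rw [Matrix.smul_mul, Matrix.trace_smul, re_real_smul']
    rw [hPg, ← mul_assoc, mul_inv_cancel₀ hΔ, one_mul]
    unfold Escore
    exact Finset.sum_comm
  refine ⟨hens, key, ?_⟩
  -- Part 3 : maxima
  have hset : {p : ℝ | ∃ M : Y → Mat d, IsMeasurement M ∧ p = Escore f E M} =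
      Δconst f E • {p : ℝ | ∃ M : Y → Mat d, IsMeasurement M ∧ p = Pg (auxEns f E) M} := by
    ext p
    constructor
    · rintro ⟨M, hM, rfl⟩
      exact ⟨Pg (auxEns f E) M, ⟨M, hM, rfl⟩, by simpa [smul_eq_mul] using (key M hM).symm⟩
    · rintro ⟨q, ⟨M, hM, rfl⟩, rfl⟩
      exact ⟨M, hM, by simpa [smul_eq_mul] using (key M hM).symm⟩
  unfold EMax PgMax
  rw [hset, Real.sSup_smul_of_nonneg hΔnn]
  rfl
end
end

section
/- Incompatibility witness: Let 𝓔 be a state ensemble on a finite-dimensional complex Hilbert space ℋ with finite label set X, let Y, T be finite sets, f : X × Y → [0,1] a score function and α a partial information map. If a collection (N_t)_{t∈T} of measurements with outcome set Y satisfies E^prior_{f,α}(𝓔; (N_t)) > E^post_{f,α}(𝓔), then the collection (N_t)_{t∈T} is incompatible. Equivalently: if (N_t)_{t∈T} is compatible, then E^prior_{f,α}(𝓔; (N_t)) ≤ E^post_{f,α}(𝓔). -/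
open scoped BigOperators
open Matrix
open scoped ComplexOrder

noncomputable section

lemma trace_re_nonneg {d : ℕ} {A : Matrix (Fin d) (Fin d) ℂ} (hA : A.PosSemidef) :
    0 ≤ A.trace.re := by
  rw [Matrix.trace]
  simp only [Matrix.diag, Complex.re_sum]
  apply Finset.sum_nonneg
  intro i _
  have := hA.re_dotProduct_nonneg (Pi.single i 1)
  simpa [dotProduct, mulVec, Pi.single_apply, Finset.mul_sum] using this

open scoped MatrixOrder in
lemma trace_mul_re_nonneg {d : ℕ} {A B : Matrix (Fin d) (Fin d) ℂ}
    (hA : A.PosSemidef) (hB : B.PosSemidef) : 0 ≤ (A * B).trace.re := by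
  have h1 : A * B = CFC.sqrt A * (CFC.sqrt A * B) := by
    rw [← mul_assoc, CFC.sqrt_mul_sqrt_self A hA.nonneg]
  rw [h1, Matrix.trace_mul_comm]
  have h2 : CFC.sqrt A * B * CFC.sqrt A = CFC.sqrt A * B * (CFC.sqrt A)ᴴ := by
    rw [(CFC.sqrt_nonneg A).posSemidef.1.eq]
  rw [mul_assoc] at h2 ⊢
  exact trace_re_nonneg (h2 ▸ (hB.mul_mul_conjTranspose_same (CFC.sqrt A)))

lemma epost_le_one {d : ℕ} {X Y T Z : Type} [Fintype X] [Fintype Y] [Fintype T] [Fintype Z]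
    (f : X → Y → ℝ) (hf : IsScore f)
    (α : T → X → ℝ) (hα : IsPartialInfo α)
    (E : X → Mat d) (hE : IsStateEnsemble E)
    (M : Z → Mat d) (hM : IsMeasurement M)
    (ν : T → Y → Z → ℝ) (hν : IsPostProc ν) :
    Epost f α E M ν ≤ 1 := by
  have hc : ∀ x z, 0 ≤ ((E x) * (M z)).trace.re :=
    fun x z => trace_mul_re_nonneg (hE.1 x) (hM.1 z)
  have step1 : Epost f α E M ν ≤
      ∑ x, ∑ y, ∑ t, ∑ z, α t x * ν t y z * ((E x) * (M z)).trace.re := by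
    unfold Epost
    refine Finset.sum_le_sum fun x _ => Finset.sum_le_sum fun y _ =>
      Finset.sum_le_sum fun t _ => Finset.sum_le_sum fun z _ => ?_
    have hrest : 0 ≤ α t x * ν t y z * ((E x) * (M z)).trace.re :=
      mul_nonneg (mul_nonneg (hα.1 t x) (hν.1 t y z)) (hc x z)
    calc f x y * α t x * ν t y z * ((E x) * (M z)).trace.re
        = f x y * (α t x * ν t y z * ((E x) * (M z)).trace.re) := by ring
      _ ≤ 1 * (α t x * ν t y z * ((E x) * (M z)).trace.re) :=
          mul_le_mul_of_nonneg_right (hf x y).2 hrest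
      _ = α t x * ν t y z * ((E x) * (M z)).trace.re := one_mul _
  have step2 : ∑ x, ∑ y, ∑ t, ∑ z, α t x * ν t y z * ((E x) * (M z)).trace.re
      = ∑ x, (E x).trace.re := by
    refine Finset.sum_congr rfl fun x _ => ?_
    rw [Finset.sum_comm]
    have : ∀ t : T, ∑ y, ∑ z, α t x * ν t y z * ((E x) * (M z)).trace.re
        = α t x * (E x).trace.re := by
      intro t
      rw [Finset.sum_comm]
      have hz : ∀ z : Z, ∑ y, α t x * ν t y z * ((E x) * (M z)).trace.re
          = α t x * ((E x) * (M z)).trace.re := by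
        intro z
        rw [← Finset.sum_mul, ← Finset.mul_sum, hν.2 t z, mul_one]
      rw [Finset.sum_congr rfl fun z _ => hz z, ← Finset.mul_sum]
      congr 1
      have : ∑ z, ((E x) * (M z)).trace.re = ((E x) * (∑ z, M z)).trace.re := by
        rw [Finset.mul_sum, Matrix.trace_sum, Complex.re_sum]
      rw [this, hM.2, mul_one]
    rw [Finset.sum_congr rfl fun t _ => this t, ← Finset.sum_mul, hα.2 x, one_mul]
  have step3 : ∑ x, (E x).trace.re = 1 := by
    have : (∑ x, (E x).trace).re = (1 : ℂ).re := by rw [hE.2]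
    simpa [Complex.re_sum] using this
  linarith [step1, step2.le, step2.ge]

theorem stmt11 {d : ℕ} {X Y T : Type} [Fintype X] [Fintype Y] [Fintype T]
    (E : X → Mat d) (hE : IsStateEnsemble E)
    (f : X → Y → ℝ) (hf : IsScore f)
    (α : T → X → ℝ) (hα : IsPartialInfo α)
    (N : T → Y → Mat d) (hN : ∀ t, IsMeasurement (N t))
    (hgt : Eprior f α E N > EpostMax f α E) :
    ¬ IsCompatible N := by
  rintro ⟨n, M, ν, hM, hν, hcomp⟩
  have heq : Eprior f α E N = Epost f α E M ν := by
    unfold Eprior Epost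
    refine Finset.sum_congr rfl fun x _ => Finset.sum_congr rfl fun y _ =>
      Finset.sum_congr rfl fun t _ => ?_
    have : ((E x) * (N t y)).trace.re = ∑ z, ν t y z * ((E x) * (M z)).trace.re := by
      rw [hcomp t y, Finset.mul_sum, Matrix.trace_sum, Complex.re_sum]
      refine Finset.sum_congr rfl fun z _ => ?_
      rw [Matrix.mul_smul, Matrix.trace_smul]
      simp [Complex.smul_re]
    rw [this, Finset.mul_sum]
    refine Finset.sum_congr rfl fun z _ => by ring
  have hmem : Eprior f α E N ∈ {p : ℝ | ∃ (n : ℕ) (M : Fin n → Mat d) (ν : T → Y → Fin n → ℝ),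
      IsMeasurement M ∧ IsPostProc ν ∧ p = Epost f α E M ν} :=
    ⟨n, M, ν, hM, hν, heq⟩
  have hbdd : BddAbove {p : ℝ | ∃ (n : ℕ) (M : Fin n → Mat d) (ν : T → Y → Fin n → ℝ),
      IsMeasurement M ∧ IsPostProc ν ∧ p = Epost f α E M ν} := by
    refine ⟨1, fun p hp => ?_⟩
    obtain ⟨n, M, ν, hM, hν, rfl⟩ := hp
    exact epost_le_one f hf α hα E hE M hM ν hν
  have hle : Eprior f α E N ≤ EpostMax f α E := le_csSup hbdd hmem
  exact absurd hgt (not_lt.mpr hle)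
end
end

section
/- Commuting ensembles make the timing of partial information irrelevant: Let 𝓔 be a state ensemble on a finite-dimensional complex Hilbert space ℋ with finite label set X such that 𝓔(x)·𝓔(x') = 𝓔(x')·𝓔(x) for all x, x' ∈ X. Then for every finite sets Y, T, every score function f : X × Y → [0,1], and every partial information map α, one has E^prior_{f,α}(𝓔) = E^post_{f,α}(𝓔). In particular, for every collection of measurements (N_t)_{t∈T} with outcome set Y there exists a compatible collection (N'_t)_{t∈T} with E^prior_{f,α}(𝓔; (N_t)) = E^prior_{f,α}(𝓔; (N'_t)). -/
open scoped BigOperators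
open Matrix
open scoped ComplexOrder

noncomputable section

/-! ### Auxiliary lemmas -/

section AuxLemmas

variable {d : ℕ}

lemma trace_mul_vmv (B : Mat d) (w u : Fin d → ℂ) :
    (B * Matrix.vecMulVec w u).trace = u ⬝ᵥ (B *ᵥ w) := by
  simp only [Matrix.trace, Matrix.diag, Matrix.mul_apply, Matrix.vecMulVec_apply,
    dotProduct, Matrix.mulVec, Finset.mul_sum]
  exact Finset.sum_congr rfl fun i _ => Finset.sum_congr rfl fun k _ => by ring

lemma complex_nonneg_coe_re {z : ℂ} (h : 0 ≤ z) : (z.re : ℂ) = z := by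
  rw [Complex.le_def] at h
  exact Complex.ext (by simp) (by simpa using h.2)

lemma complex_re_nonneg_of_nonneg {z : ℂ} (h : 0 ≤ z) : 0 ≤ z.re :=
  (Complex.le_def.mp h).1

lemma real_smul_matrix (r : ℝ) (A : Mat d) : r • A = (r : ℂ) • A := by
  ext i j
  simp [Complex.real_smul]

lemma posSemidef_real_smul {A : Mat d} (hA : A.PosSemidef) {r : ℝ} (hr : 0 ≤ r) :
    (r • A).PosSemidef := by
  rw [real_smul_matrix]
  refine Matrix.PosSemidef.of_dotProduct_mulVec_nonneg ?_ ?_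
  · have : ((r : ℂ) • A)ᴴ = star (r : ℂ) • Aᴴ := Matrix.conjTranspose_smul _ _
    rw [Matrix.IsHermitian, this, Complex.star_def, Complex.conj_ofReal, hA.1]
  · intro x
    rw [Matrix.smul_mulVec, dotProduct_smul, smul_eq_mul]
    exact mul_nonneg (by exact_mod_cast hr) (hA.dotProduct_mulVec_nonneg x)

lemma posSemidef_vmv (w : Fin d → ℂ) : (Matrix.vecMulVec w (star w)).PosSemidef := by
  rw [Matrix.vecMulVec_eq (Fin 1), ← Matrix.conjTranspose_replicateCol]
  exact Matrix.posSemidef_self_mul_conjTranspose _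

lemma posSemidef_sum {Z : Type*} [Fintype Z] {M : Z → Mat d}
    (h : ∀ z, (M z).PosSemidef) : (∑ z, M z).PosSemidef :=
  Finset.sum_induction M Matrix.PosSemidef (fun _ _ ha hb => ha.add hb)
    Matrix.PosSemidef.zero (fun z _ => h z)

lemma trace_mul_sum_smul {Z : Type*} [Fintype Z] (A : Mat d) (r : Z → ℝ) (M : Z → Mat d) :
    (A * ∑ z, r z • M z).trace = ∑ z, (r z : ℂ) * (A * M z).trace := by
  rw [Matrix.mul_sum, Matrix.trace_sum]
  refine Finset.sum_congr rfl fun z _ => ?_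
  rw [real_smul_matrix, Matrix.mul_smul, Matrix.trace_smul, smul_eq_mul]

lemma herm_dot {H : Mat d} (hH : H.IsHermitian) (a b : Fin d → ℂ) :
    star a ⬝ᵥ (H *ᵥ b) = star (H *ᵥ a) ⬝ᵥ b := by
  rw [Matrix.dotProduct_mulVec, Matrix.star_mulVec, hH.eq]

lemma epost_eq_eprior {X Y T Z : Type} [Fintype X] [Fintype Y] [Fintype T] [Fintype Z]
    (f : X → Y → ℝ) (α : T → X → ℝ) (E : X → Mat d)
    (M : Z → Mat d) (ν : T → Y → Z → ℝ) :
    Epost f α E M ν = Eprior f α E (fun t y => ∑ z, ν t y z • M z) := by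
  unfold Epost Eprior
  refine Finset.sum_congr rfl fun x _ => Finset.sum_congr rfl fun y _ =>
    Finset.sum_congr rfl fun t _ => ?_
  rw [trace_mul_sum_smul, Complex.re_sum, Finset.mul_sum]
  refine Finset.sum_congr rfl fun z _ => ?_
  rw [Complex.re_ofReal_mul]
  ring

set_option maxHeartbeats 2000000 in
/-- Existence of a joint eigenbasis for a commuting family of Hermitian matrices. -/
lemma exists_joint_eigenbasis {d : ℕ} {X : Type} [Fintype X] (E : X → Mat d)
    (hH : ∀ x, (E x).IsHermitian) (hcomm : ∀ x x', E x * E x' = E x' * E x) :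
    ∃ v : Fin d → (Fin d → ℂ),
      (∀ j k, star (v j) ⬝ᵥ v k = if j = k then 1 else 0) ∧
      (∀ x j, ∃ c : ℂ, (E x) *ᵥ v j = c • v j) := by
  classical
  set T : X → Module.End ℂ (EuclideanSpace ℂ (Fin d)) :=
    fun x => Matrix.toEuclideanLin (E x) with hT
  have hsym : ∀ x, (T x).IsSymmetric := fun x => Matrix.isHermitian_iff_isSymmetric.mp (hH x)
  have key : ∀ a b : X, T a * T b = Matrix.toEuclideanLin (E a * E b) := by
    intro a b
    ext u
    show ((E a) *ᵥ ((E b) *ᵥ _)) _ = ((E a * E b) *ᵥ _) _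
    rw [Matrix.mulVec_mulVec]
  have hcom : Pairwise (Function.onFun Commute T) := by
    intro x x' _
    show T x * T x' = T x' * T x
    rw [key, key, hcomm]
  set V : (X → ℂ) → Submodule ℂ (EuclideanSpace ℂ (Fin d)) :=
    fun χ => ⨅ x, Module.End.eigenspace (T x) (χ x) with hV
  have htop : ⨆ χ, V χ = ⊤ :=
    LinearMap.IsSymmetric.iSup_iInf_eq_top_of_commute hsym hcom
  have horth := LinearMap.IsSymmetric.orthogonalFamily_iInf_eigenspaces hsym
  have hSfin : {χ : X → ℂ | V χ ≠ ⊥}.Finite := by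
    refine Set.Finite.subset
      (Set.Finite.pi (fun x => Module.End.finite_hasEigenvalue (f := T x))) ?_
    intro χ hχ
    rw [Set.mem_pi]
    intro x _
    show Module.End.HasEigenvalue (T x) (χ x)
    rw [Module.End.hasEigenvalue_iff]
    intro h
    exact hχ (le_bot_iff.mp ((iInf_le (fun x => Module.End.eigenspace (T x) (χ x)) x).trans
      (le_of_eq h)))
  haveI : Fintype {χ : X → ℂ | V χ ≠ ⊥} := hSfin.fintype
  have horth' := horth.comp
    (Subtype.coe_injective : Function.Injective ((↑) : {χ : X → ℂ | V χ ≠ ⊥} → (X → ℂ)))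
  have hsup' : ⨆ s : {χ : X → ℂ | V χ ≠ ⊥}, V s.1 = ⊤ := by
    rw [← htop]
    refine le_antisymm ?_ ?_
    · exact iSup_le fun s => le_iSup V s.1
    · refine iSup_le fun χ => ?_
      by_cases hχ : V χ ≠ ⊥
      · exact le_iSup (fun s : {χ : X → ℂ | V χ ≠ ⊥} => V s.1) (⟨χ, hχ⟩ : {χ : X → ℂ | V χ ≠ ⊥})
      · rw [not_not.mp hχ]; exact bot_le
  have hint : DirectSum.IsInternal (fun s : {χ : X → ℂ | V χ ≠ ⊥} => V s.1) := by
    rw [horth'.isInternal_iff, hsup', Submodule.top_orthogonal_eq_bot]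
  have hn : Module.finrank ℂ (EuclideanSpace ℂ (Fin d)) = d := finrank_euclideanSpace_fin
  set b := hint.subordinateOrthonormalBasis hn horth' with hb
  refine ⟨fun j => WithLp.equiv 2 (Fin d → ℂ) (b j), ?_, ?_⟩
  · intro j k
    have horm := orthonormal_iff_ite.mp b.orthonormal j k
    rw [← horm]
    simp only [dotProduct, PiLp.inner_apply, RCLike.inner_apply, Pi.star_apply]
    exact Finset.sum_congr rfl fun _ _ => mul_comm _ _
  · intro x j
    have hmem := hint.subordinateOrthonormalBasis_subordinate hn j horth'
    set idx : {χ : X → ℂ | V χ ≠ ⊥} := hint.subordinateOrthonormalBasisIndex hn j horth'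
      with hidx
    have hx : b j ∈ Module.End.eigenspace (T x) ((idx : X → ℂ) x) :=
      (Submodule.mem_iInf _).mp hmem x
    rw [Module.End.mem_eigenspace_iff] at hx
    refine ⟨(idx : X → ℂ) x, ?_⟩
    have h2 := congrArg (WithLp.equiv 2 (Fin d → ℂ)) hx
    simpa [hT] using h2

end AuxLemmas

theorem stmt13 {d : ℕ} {X Y T : Type} [Fintype X] [Fintype Y] [Fintype T]
    (E : X → Mat d) (hE : IsStateEnsemble E)
    (hcomm : ∀ x x', E x * E x' = E x' * E x)
    (f : X → Y → ℝ) (hf : IsScore f)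
    (α : T → X → ℝ) (hα : IsPartialInfo α) :
    EpriorMax f α E = EpostMax f α E ∧
    ∀ N : T → Y → Mat d, (∀ t, IsMeasurement (N t)) →
      ∃ N' : T → Y → Mat d, IsCompatible N' ∧ Eprior f α E N = Eprior f α E N' := by
  classical
  obtain ⟨v, hvorth, hveig⟩ := exists_joint_eigenbasis E (fun x => (hE.1 x).1) hcomm
  have hvnorm : ∀ j, star (v j) ⬝ᵥ v j = 1 := fun j => by
    simpa using hvorth j j
  -- the pinching measurement
  set M : Fin d → Mat d := fun j => Matrix.vecMulVec (v j) (star (v j)) with hM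
  have hMpsd : ∀ j, (M j).PosSemidef := fun j => posSemidef_vmv (v j)
  have hMsum : ∑ j, M j = (1 : Mat d) := by
    set U : Mat d := Matrix.of (fun i j => v j i) with hU
    have h1 : Uᴴ * U = 1 := by
      ext j k
      have := hvorth j k
      simp only [Matrix.mul_apply, Matrix.conjTranspose_apply, Matrix.one_apply, hU,
        Matrix.of_apply]
      simpa [dotProduct] using this
    have h2 : U * Uᴴ = 1 := mul_eq_one_comm.mp h1
    calc ∑ j, M j = U * Uᴴ := by
          ext i k
          simp [Matrix.sum_apply, hM, Matrix.vecMulVec_apply, Matrix.mul_apply,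
            Matrix.conjTranspose_apply, hU]
      _ = 1 := h2
  have hMmeas : IsMeasurement M := ⟨hMpsd, hMsum⟩
  choose c hc using hveig
  have htraceM : ∀ x j, ((E x) * M j).trace = c x j := by
    intro x j
    rw [hM, trace_mul_vmv, hc, dotProduct_smul, hvnorm, smul_eq_mul, mul_one]
  have hcnonneg : ∀ x j, 0 ≤ c x j := by
    intro x j
    have h0 := (hE.1 x).dotProduct_mulVec_nonneg (v j)
    rwa [hc, dotProduct_smul, hvnorm, smul_eq_mul, mul_one] at h0
  have hcstar : ∀ x j, star (c x j) = c x j := by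
    intro x j
    rw [← complex_nonneg_coe_re (hcnonneg x j), Complex.star_def, Complex.conj_ofReal]
  -- the pinching identity
  have pinch : ∀ x (N0 : Mat d), N0.PosSemidef →
      ((E x) * N0).trace = ∑ j, (((star (v j) ⬝ᵥ (N0 *ᵥ v j)).re : ℂ)) * c x j := by
    intro x N0 hN0
    have step1 : ((E x) * N0).trace = ∑ j, star (v j) ⬝ᵥ (((E x) * N0) *ᵥ v j) := by
      conv_lhs => rw [← mul_one ((E x) * N0), ← hMsum]
      rw [Matrix.mul_sum, Matrix.trace_sum]
      exact Finset.sum_congr rfl fun j _ => trace_mul_vmv _ _ _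
    rw [step1]
    refine Finset.sum_congr rfl fun j _ => ?_
    rw [← Matrix.mulVec_mulVec, herm_dot (hE.1 x).1, hc, star_smul,
      smul_dotProduct, smul_eq_mul, hcstar,
      complex_nonneg_coe_re (hN0.dotProduct_mulVec_nonneg (v j))]
    ring
  -- data associated with a collection of measurements
  set ν : (T → Y → Mat d) → T → Y → Fin d → ℝ :=
    fun N t y j => (star (v j) ⬝ᵥ ((N t y) *ᵥ v j)).re with hν
  have hνnonneg : ∀ N : T → Y → Mat d, (∀ t, IsMeasurement (N t)) →
      ∀ t y j, 0 ≤ ν N t y j := by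
    intro N hN t y j
    exact complex_re_nonneg_of_nonneg (((hN t).1 y).dotProduct_mulVec_nonneg (v j))
  have hνsum : ∀ N : T → Y → Mat d, (∀ t, IsMeasurement (N t)) →
      ∀ t j, ∑ y, ν N t y j = 1 := by
    intro N hN t j
    have hdot : ∑ y, star (v j) ⬝ᵥ ((N t y) *ᵥ v j) = 1 := by
      calc ∑ y, star (v j) ⬝ᵥ ((N t y) *ᵥ v j)
          = ∑ y, ((N t y) * M j).trace :=
            Finset.sum_congr rfl fun y _ => (trace_mul_vmv _ _ _).symm
        _ = ((∑ y, N t y) * M j).trace := by rw [Matrix.sum_mul, Matrix.trace_sum]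
        _ = ((1 : Mat d) * M j).trace := by rw [(hN t).2]
        _ = star (v j) ⬝ᵥ ((1 : Mat d) *ᵥ v j) := trace_mul_vmv _ _ _
        _ = 1 := by rw [Matrix.one_mulVec, hvnorm]
    have hre : (∑ y, ν N t y j : ℝ) = (∑ y, star (v j) ⬝ᵥ ((N t y) *ᵥ v j)).re := by
      rw [Complex.re_sum]
    rw [hre, hdot]
    simp
  have hνpp : ∀ N : T → Y → Mat d, (∀ t, IsMeasurement (N t)) → IsPostProc (ν N) :=
    fun N hN => ⟨hνnonneg N hN, fun t j => hνsum N hN t j⟩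
  -- the pinched collection
  set pin : (T → Y → Mat d) → T → Y → Mat d :=
    fun N t y => ∑ j, ν N t y j • M j with hpin
  have hpinmeas : ∀ N : T → Y → Mat d, (∀ t, IsMeasurement (N t)) →
      ∀ t, IsMeasurement (pin N t) := by
    intro N hN t
    constructor
    · intro y
      exact posSemidef_sum fun j => posSemidef_real_smul (hMpsd j) (hνnonneg N hN t y j)
    · rw [hpin]
      rw [Finset.sum_comm]
      calc ∑ j, ∑ y, ν N t y j • M j = ∑ j, (∑ y, ν N t y j) • M j := by
            exact Finset.sum_congr rfl fun j _ => (Finset.sum_smul).symm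
        _ = ∑ j, M j := by
            refine Finset.sum_congr rfl fun j _ => ?_
            rw [hνsum N hN t j, one_smul]
        _ = 1 := hMsum
  have htr : ∀ N : T → Y → Mat d, (∀ t, IsMeasurement (N t)) →
      ∀ x t y, ((E x) * (N t y)).trace = ((E x) * (pin N t y)).trace := by
    intro N hN x t y
    rw [hpin, trace_mul_sum_smul, pinch x _ ((hN t).1 y)]
    exact Finset.sum_congr rfl fun j _ => by rw [htraceM]
  have hEprior_eq : ∀ N : T → Y → Mat d, (∀ t, IsMeasurement (N t)) →
      Eprior f α E N = Eprior f α E (pin N) := by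
    intro N hN
    unfold Eprior
    refine Finset.sum_congr rfl fun x _ => Finset.sum_congr rfl fun y _ =>
      Finset.sum_congr rfl fun t _ => ?_
    rw [htr N hN x t y]
  have hEpost_eq : ∀ N : T → Y → Mat d,
      Epost f α E M (ν N) = Eprior f α E (pin N) := by
    intro N
    rw [epost_eq_eprior]
  -- set equality
  have hset : {p : ℝ | ∃ N : T → Y → Mat d, (∀ t, IsMeasurement (N t)) ∧ p = Eprior f α E N}
      = {p : ℝ | ∃ (n : ℕ) (M : Fin n → Mat d) (ν : T → Y → Fin n → ℝ),
          IsMeasurement M ∧ IsPostProc ν ∧ p = Epost f α E M ν} := by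
    ext p
    constructor
    · rintro ⟨N, hN, rfl⟩
      exact ⟨d, M, ν N, hMmeas, hνpp N hN,
        by rw [hEpost_eq N, hEprior_eq N hN]⟩
    · rintro ⟨n, M0, ν0, hM0, hν0, rfl⟩
      refine ⟨fun t y => ∑ z, ν0 t y z • M0 z, ?_, (epost_eq_eprior f α E M0 ν0)⟩
      intro t
      constructor
      · intro y
        exact posSemidef_sum fun z => posSemidef_real_smul (hM0.1 z) (hν0.1 t y z)
      · rw [Finset.sum_comm]
        calc ∑ z, ∑ y, ν0 t y z • M0 z = ∑ z, (∑ y, ν0 t y z) • M0 z := by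
              exact Finset.sum_congr rfl fun z _ => (Finset.sum_smul).symm
          _ = ∑ z, M0 z := by
              refine Finset.sum_congr rfl fun z _ => ?_
              rw [hν0.2 t z, one_smul]
          _ = 1 := hM0.2
  constructor
  · rw [EpriorMax, EpostMax, hset]
  · intro N hN
    exact ⟨pin N, ⟨d, M, ν N, hMmeas, hνpp N hN, fun t y => rfl⟩, hEprior_eq N hN⟩
end
end
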